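/- Let Ω ⊆ ℂ be an open set with [a,b] ⊆ Ω (a < b real), and let z ∈ ℂ \ [a,b]. Let V : Ω × Ω → B(𝔥) be continuous, such that for each fixed μ ∈ Ω the map λ ↦ V(λ,μ) is holomorphic (complex differentiable) on Ω, and for each fixed λ ∈ Ω the map μ ↦ V(λ,μ) is holomorphic on Ω. Suppose T : Ω × Ω → B(𝔥) is continuous and satisfies, for all λ, μ ∈ Ω, both Lippmann–Schwinger equations T(λ,μ) = V(λ,μ) − ∫_a^b (ν − z)⁻¹ • (V(λ,ν) ∘ T(ν,μ)) dν and T(λ,μ) = V(λ,μ) − ∫_a^b (ν − z)⁻¹ • (T(λ,ν) ∘ V(ν,μ)) dν. Then for each fixed μ ∈ Ω the map λ ↦ T(λ,μ) is holomorphic on Ω, and for each fixed λ ∈ Ω the map μ ↦ T(λ,μ) is holomorphic on Ω. -/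

import Mathlib

open MeasureTheory Set ContinuousLinearMap

open Metric Filter


lemma differentiableOn_intervalIntegral_param
    {E : Type*} [NormedAddCommGroup E] [NormedSpace ℂ E] [CompleteSpace E]
    {a b : ℝ} (hab : a ≤ b) {Ω : Set ℂ} (hΩ : IsOpen Ω)
    (F : ℂ → ℝ → E)
    (hFc : ContinuousOn (fun p : ℂ × ℝ => F p.1 p.2) (Ω ×ˢ Set.Icc a b))
    (hFd : ∀ ν ∈ Set.Icc a b, DifferentiableOn ℂ (fun lam => F lam ν) Ω) :
    DifferentiableOn ℂ (fun lam => ∫ ν in a..b, F lam ν) Ω := by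
  intro x₀ hx₀
  have hslice : ∀ x ∈ Ω, ContinuousOn (fun ν => F x ν) (Set.Icc a b) := by
    intro x hx
    have : ContinuousOn (fun ν : ℝ => ((x, ν) : ℂ × ℝ)) (Set.Icc a b) :=
      (continuous_const.prodMk continuous_id).continuousOn
    exact hFc.comp this (fun ν hν => ⟨hx, hν⟩)
  obtain ⟨ε, hε, hball⟩ := Metric.isOpen_iff.1 hΩ x₀ hx₀
  set r : ℝ := ε / 3 with hr
  have hrpos : 0 < r := by positivity
  have h2r : closedBall x₀ (2 * r) ⊆ Ω := by
    refine subset_trans ?_ hball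
    intro y hy
    have h1 : dist y x₀ ≤ 2 * r := hy
    show dist y x₀ < ε
    rw [hr] at h1; linarith
  obtain ⟨M, hM⟩ := (isCompact_closedBall x₀ (2 * r)).prod isCompact_Icc
    |>.exists_bound_of_continuousOn (hFc.mono (Set.prod_mono h2r subset_rfl))
  have hMr : ∀ ν ∈ Set.Icc a b, ∀ x ∈ ball x₀ r, ‖deriv (fun l => F l ν) x‖ ≤ M / r := by
    intro ν hν x hx
    have hsub : closedBall x r ⊆ closedBall x₀ (2 * r) := by
      intro y hy
      have h1 : dist y x ≤ r := hy
      have h2 : dist x x₀ < r := hx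
      calc dist y x₀ ≤ dist y x + dist x x₀ := dist_triangle _ _ _
        _ ≤ 2 * r := by linarith
    have hd : DiffContOnCl ℂ (fun l => F l ν) (ball x r) := by
      refine DifferentiableOn.diffContOnCl ((hFd ν hν).mono ?_)
      exact subset_trans closure_ball_subset_closedBall (hsub.trans h2r)
    exact Complex.norm_deriv_le_of_forall_mem_sphere_norm_le hrpos hd
      (fun w hw => hM (w, ν) ⟨hsub (sphere_subset_closedBall hw), hν⟩)
  set F' : ℂ → ℝ → E := fun x ν => deriv (fun l => F l ν) x with hF'
  have hballΩ : closedBall x₀ r ⊆ Ω :=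
    (closedBall_subset_closedBall (by linarith)).trans h2r
  have hballΩ' : ball x₀ r ⊆ Ω := ball_subset_closedBall.trans hballΩ
  have hmeas : ∀ x ∈ Ω, AEStronglyMeasurable (F x) (volume.restrict (Set.uIoc a b)) := by
    intro x hx
    refine ((hslice x hx).mono ?_).aestronglyMeasurable measurableSet_uIoc
    rw [Set.uIoc_of_le hab]; exact Set.Ioc_subset_Icc_self
  have key : HasDerivAt (fun x => ∫ ν in a..b, F x ν) (∫ ν in a..b, F' x₀ ν) x₀ := by
    refine (intervalIntegral.hasDerivAt_integral_of_dominated_loc_of_deriv_le (ball_mem_nhds x₀ hrpos)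
      (F := F) (F' := F') (bound := fun _ => M / r) ?_ ?_ ?_ ?_ ?_ ?_).2
    · filter_upwards [hΩ.mem_nhds hx₀] with x hx using hmeas x hx
    · exact ((hslice x₀ hx₀).mono (by rw [Set.uIcc_of_le hab])).intervalIntegrable
    · -- measurability of F' x₀ via difference quotients
      set h : ℕ → ℂ := fun n => ((r / (n + 1) : ℝ) : ℂ) with hh
      have hne : ∀ n, h n ≠ 0 := by
        intro n
        simp only [hh, ne_eq, Complex.ofReal_eq_zero]
        positivity
      have hmem : ∀ n : ℕ, x₀ + h n ∈ Ω := by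
        intro n
        apply hballΩ
        have hd : dist (x₀ + h n) x₀ = r / (n + 1) := by
          rw [dist_eq_norm]
          simp only [hh, add_sub_cancel_left, Complex.norm_real, Real.norm_eq_abs]
          exact abs_of_pos (by positivity)
        rw [mem_closedBall, hd]
        rw [div_le_iff₀ (by positivity)]
        nlinarith [hrpos]
      have hAESM : ∀ n : ℕ, AEStronglyMeasurable
          (fun ν => (h n)⁻¹ • (F (x₀ + h n) ν - F x₀ ν)) (volume.restrict (Set.uIoc a b)) :=
        fun n => (((hmeas _ (hmem n)).sub (hmeas _ hx₀)).const_smul _)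
      refine aestronglyMeasurable_of_tendsto_ae atTop hAESM ?_
      filter_upwards [ae_restrict_mem measurableSet_uIoc] with ν hν
      have hν' : ν ∈ Set.Icc a b := by
        rw [Set.uIoc_of_le hab] at hν; exact Set.Ioc_subset_Icc_self hν
      have hder : HasDerivAt (fun l => F l ν) (F' x₀ ν) x₀ :=
        ((hFd ν hν').differentiableAt (hΩ.mem_nhds hx₀)).hasDerivAt
      rw [hasDerivAt_iff_tendsto_slope] at hder
      have hseq : Tendsto (fun n : ℕ => x₀ + h n) atTop (nhdsWithin x₀ {x₀}ᶜ) := by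
        refine tendsto_nhdsWithin_of_tendsto_nhds_of_eventually_within _ ?_ ?_
        · have h1 : Tendsto (fun n : ℕ => r / ((n : ℝ) + 1)) atTop (nhds 0) := by
            simpa using (tendsto_one_div_add_atTop_nhds_zero_nat).const_mul r |>.congr
              (fun n => by rw [mul_one_div])
          have h2 : Tendsto (fun n : ℕ => h n) atTop (nhds (((0:ℝ):ℂ))) :=
            (Complex.continuous_ofReal.tendsto 0).comp h1
          have h3 := (tendsto_const_nhds (x := x₀) (f := atTop (α := ℕ))).add h2
          simpa using h3
        · refine Eventually.of_forall fun n => ?_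
          simp only [Set.mem_compl_iff, Set.mem_singleton_iff]
          intro hc
          refine hne n ?_
          have := congrArg (fun w => w - x₀) hc
          simpa using this
      have := hder.comp hseq
      refine this.congr fun n => ?_
      simp [slope_def_module, hh]
    · refine Filter.Eventually.of_forall fun ν hν x hx => ?_
      have hν' : ν ∈ Set.Icc a b := by
        rw [Set.uIoc_of_le hab] at hν; exact Set.Ioc_subset_Icc_self hν
      exact hMr ν hν' x hx
    · exact intervalIntegrable_const
    · refine Filter.Eventually.of_forall fun ν hν x hx => ?_
      have hν' : ν ∈ Set.Icc a b := by
        rw [Set.uIoc_of_le hab] at hν; exact Set.Ioc_subset_Icc_self hν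
      exact ((hFd ν hν').differentiableAt (hΩ.mem_nhds (hballΩ' hx))).hasDerivAt
  exact key.differentiableAt.differentiableWithinAt


/-- Proposition 1 (first assertion): if the potential kernel `V(λ,μ)` is holomorphic in both
arguments on `Ω ⊇ [a,b]` and the kernel `T(λ,μ) = T(λ,μ,z)` satisfies both Lippmann–Schwinger
equations, then `T` is holomorphic in both arguments on `Ω`. -/
theorem transition_kernel_holomorphic
    {𝕙 : Type*} [NormedAddCommGroup 𝕙] [InnerProductSpace ℂ 𝕙] [CompleteSpace 𝕙]
    (a b : ℝ) (hab : a < b)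
    (Ω : Set ℂ) (hΩopen : IsOpen Ω)
    (hΩsub : ∀ x : ℝ, x ∈ Set.Icc a b → (x : ℂ) ∈ Ω)
    (z : ℂ) (hz : z ∉ (fun x : ℝ => (x : ℂ)) '' Set.Icc a b)
    (V T : ℂ → ℂ → (𝕙 →L[ℂ] 𝕙))
    (hVcont : ContinuousOn (fun p : ℂ × ℂ => V p.1 p.2) (Ω ×ˢ Ω))
    (hVhol₁ : ∀ μ ∈ Ω, DifferentiableOn ℂ (fun lam => V lam μ) Ω)
    (hVhol₂ : ∀ lam ∈ Ω, DifferentiableOn ℂ (fun μ => V lam μ) Ω)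
    (hTcont : ContinuousOn (fun p : ℂ × ℂ => T p.1 p.2) (Ω ×ˢ Ω))
    (hLS₁ : ∀ lam ∈ Ω, ∀ μ ∈ Ω,
      T lam μ = V lam μ - ∫ ν in a..b, ((ν : ℂ) - z)⁻¹ • (V lam (↑ν) ∘L T (↑ν) μ))
    (hLS₂ : ∀ lam ∈ Ω, ∀ μ ∈ Ω,
      T lam μ = V lam μ - ∫ ν in a..b, ((ν : ℂ) - z)⁻¹ • (T lam (↑ν) ∘L V (↑ν) μ)) :
    (∀ μ ∈ Ω, DifferentiableOn ℂ (fun lam => T lam μ) Ω) ∧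
    (∀ lam ∈ Ω, DifferentiableOn ℂ (fun μ => T lam μ) Ω) := by
  have hab' : a ≤ b := hab.le
  -- the resolvent factor, as a function of ν ∈ [a,b]
  have hres : ContinuousOn (fun ν : ℝ => ((ν : ℂ) - z)⁻¹) (Set.Icc a b) := by
    refine ContinuousOn.inv₀ ((Complex.continuous_ofReal.sub continuous_const).continuousOn) ?_
    intro ν hν hzero
    exact hz ⟨ν, hν, by
      have : (ν : ℂ) = z := by linear_combination hzero
      exact this⟩
  constructor
  · intro μ hμ
    refine DifferentiableOn.congr
      (f := fun lam => V lam μ - ∫ ν in a..b, ((ν : ℂ) - z)⁻¹ • (V lam (↑ν) ∘L T (↑ν) μ))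
      ?_ (fun lam hlam => hLS₁ lam hlam μ hμ)
    refine (hVhol₁ μ hμ).sub ?_
    refine differentiableOn_intervalIntegral_param hab' hΩopen _ ?_ ?_
    · -- joint continuity
      refine ContinuousOn.fun_smul ?_ ?_
      · exact hres.comp continuousOn_snd (fun p hp => hp.2)
      · refine ContinuousOn.clm_comp ?_ ?_
        · refine hVcont.comp
            ((continuous_fst.prodMk (Complex.continuous_ofReal.comp continuous_snd)).continuousOn)
            (fun p hp => ⟨hp.1, hΩsub p.2 hp.2⟩)
        · refine hTcont.comp
            (((Complex.continuous_ofReal.comp continuous_snd).prodMk continuous_const).continuousOn)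
            (fun p hp => ⟨hΩsub p.2 hp.2, hμ⟩)
    · intro ν hν
      exact ((hVhol₁ (↑ν) (hΩsub ν hν)).clm_comp (differentiableOn_const _)).fun_const_smul _
  · intro lam hlam
    refine DifferentiableOn.congr
      (f := fun μ => V lam μ - ∫ ν in a..b, ((ν : ℂ) - z)⁻¹ • (T lam (↑ν) ∘L V (↑ν) μ))
      ?_ (fun μ hμ => hLS₂ lam hlam μ hμ)
    refine (hVhol₂ lam hlam).sub ?_
    refine differentiableOn_intervalIntegral_param hab' hΩopen _ ?_ ?_
    · refine ContinuousOn.fun_smul ?_ ?_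
      · exact hres.comp continuousOn_snd (fun p hp => hp.2)
      · refine ContinuousOn.clm_comp ?_ ?_
        · refine hTcont.comp
            ((continuous_const.prodMk (Complex.continuous_ofReal.comp continuous_snd)).continuousOn)
            (fun p hp => ⟨hlam, hΩsub p.2 hp.2⟩)
        · refine hVcont.comp
            (((Complex.continuous_ofReal.comp continuous_snd).prodMk continuous_fst).continuousOn)
            (fun p hp => ⟨hΩsub p.2 hp.2, hp.1⟩)
    · intro ν hν
      exact ((differentiableOn_const _).clm_comp (hVhol₂ (↑ν) (hΩsub ν hν))).fun_const_smul _
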